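/- Under the SGD setup with f satisfying the Polyak–Łojasiewicz inequality with constant μ > 0, if η_k ≤ 1/L then the expected one-step decrease satisfies E[f(x_{k+1})] − E[f(x_k)] ≤ −μ η_k · E[f(x_k) − f(x⋆)] + L d σ⋆² η_k² / (2 b_k). -/

import Mathlib

open MeasureTheory Filter
open scoped RealInnerProductSpace


lemma descent_lemma {d : ℕ} (f : EuclideanSpace ℝ (Fin d) → ℝ) (L : ℝ)
    (hf : ContDiff ℝ 1 f)
    (hL : ∀ x y : EuclideanSpace ℝ (Fin d), ‖gradient f x - gradient f y‖ ≤ L * ‖x - y‖)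
    (x y : EuclideanSpace ℝ (Fin d)) :
    f y ≤ f x + ⟪gradient f x, y - x⟫ + L / 2 * ‖y - x‖ ^ 2 := by
  have hdf : Differentiable ℝ f := hf.differentiable one_ne_zero
  have hgc : Continuous (gradient f) := by
    have h1 : Continuous (fderiv ℝ f) := hf.continuous_fderiv one_ne_zero
    exact (InnerProductSpace.toDual ℝ _).symm.continuous.comp h1
  set v := y - x with hv
  have hline : ∀ t : ℝ, HasDerivAt (fun t : ℝ => x + t • v) v t := by
    intro t; simpa using ((hasDerivAt_id t).smul_const v).const_add x
  have hderiv : ∀ t : ℝ, HasDerivAt (fun t => f (x + t • v)) ⟪gradient f (x + t • v), v⟫ t := by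
    intro t
    have hF := (hdf (x + t • v)).hasGradientAt.hasFDerivAt
    have := hF.comp_hasDerivAt t (hline t)
    rw [InnerProductSpace.toDual_apply_apply] at this
    exact this
  have hcont : Continuous fun t : ℝ => ⟪gradient f (x + t • v), v⟫ :=
    ((hgc.comp (continuous_const.add (continuous_id.smul continuous_const))).inner continuous_const)
  have key : f y - f x = ∫ t in (0:ℝ)..1, ⟪gradient f (x + t • v), v⟫ := by
    rw [intervalIntegral.integral_eq_sub_of_hasDerivAt (fun t _ => hderiv t)
      (hcont.intervalIntegrable 0 1)]
    simp [hv]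
  have hbound : ∀ t ∈ Set.Icc (0:ℝ) 1,
      ⟪gradient f (x + t • v), v⟫ ≤ ⟪gradient f x, v⟫ + L * ‖v‖ ^ 2 * t := by
    intro t ht
    have h1 : ⟪gradient f (x + t • v) - gradient f x, v⟫
        ≤ ‖gradient f (x + t • v) - gradient f x‖ * ‖v‖ := real_inner_le_norm _ _
    have h2 : ‖gradient f (x + t • v) - gradient f x‖ ≤ L * ‖t • v‖ := by
      simpa using hL (x + t • v) x
    have h3 : ‖t • v‖ = t * ‖v‖ := by
      rw [norm_smul, Real.norm_eq_abs, abs_of_nonneg ht.1]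
    have h4 : ⟪gradient f (x + t • v) - gradient f x, v⟫
        = ⟪gradient f (x + t • v), v⟫ - ⟪gradient f x, v⟫ := inner_sub_left _ _ _
    have h5 : (0:ℝ) ≤ ‖v‖ := norm_nonneg _
    have h6 : ‖gradient f (x + t • v) - gradient f x‖ * ‖v‖ ≤ L * (t * ‖v‖) * ‖v‖ := by
      rw [← h3]; exact mul_le_mul_of_nonneg_right h2 h5
    nlinarith [h1, h4, h6]
  have hint : (∫ t in (0:ℝ)..1, ⟪gradient f (x + t • v), v⟫)
      ≤ ∫ t in (0:ℝ)..1, (⟪gradient f x, v⟫ + L * ‖v‖ ^ 2 * t) := by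
    apply intervalIntegral.integral_mono_on zero_le_one (hcont.intervalIntegrable 0 1)
      ((continuous_const.add (continuous_const.mul continuous_id')).intervalIntegrable 0 1) hbound
  have heval : (∫ t in (0:ℝ)..1, (⟪gradient f x, v⟫ + L * ‖v‖ ^ 2 * t))
      = ⟪gradient f x, v⟫ + L / 2 * ‖v‖ ^ 2 := by
    rw [intervalIntegral.integral_add (g := fun t : ℝ => L * ‖v‖ ^ 2 * t) (intervalIntegrable_const)
      ((continuous_const.mul continuous_id').intervalIntegrable 0 1),
      intervalIntegral.integral_const_mul]
    simp [integral_id]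
    ring
  linarith [key, hint, heval.le, heval.ge]

lemma memL2_mul_integrable {Ω : Type*} {m : MeasurableSpace Ω} {μ : Measure Ω} {f g : Ω → ℝ}
    (hf : MemLp f 2 μ) (hg : MemLp g 2 μ) : Integrable (fun ω => f ω * g ω) μ := by
  have hb : Integrable (fun ω => (f ω ^ 2 + g ω ^ 2) / 2) μ :=
    (hf.integrable_sq.add hg.integrable_sq).div_const 2
  refine hb.mono' (hf.aestronglyMeasurable.mul hg.aestronglyMeasurable) ?_
  filter_upwards with ω
  rw [Real.norm_eq_abs, abs_mul]
  nlinarith [sq_nonneg (|f ω| - |g ω|), sq_abs (f ω), sq_abs (g ω),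
    abs_nonneg (f ω), abs_nonneg (g ω)]

lemma memL2_inner_integrable {Ω : Type*} {m : MeasurableSpace Ω} {μ : Measure Ω} {d : ℕ}
    {f g : Ω → EuclideanSpace ℝ (Fin d)}
    (hf : MemLp f 2 μ) (hg : MemLp g 2 μ) :
    Integrable (fun ω => ⟪f ω, g ω⟫) μ := by
  have hb : Integrable (fun ω => (‖f ω‖ ^ 2 + ‖g ω‖ ^ 2) / 2) μ :=
    (hf.norm.integrable_sq.add hg.norm.integrable_sq).div_const 2
  refine hb.mono' ?_ ?_
  · exact (hf.aestronglyMeasurable.aemeasurable.inner hg.aestronglyMeasurable.aemeasurable).aestronglyMeasurable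
  · filter_upwards with ω
    rw [Real.norm_eq_abs]
    have := abs_real_inner_le_norm (f ω) (g ω)
    nlinarith [sq_nonneg (‖f ω‖ - ‖g ω‖), norm_nonneg (f ω), norm_nonneg (g ω)]

set_option maxHeartbeats 1600000 in
/-- **One-step decrease of the expected suboptimality for mini-batch SGD on
Polyak–Łojasiewicz functions.** If `f` satisfies the PŁ inequality with constant `μ > 0`
and `η_k ≤ 1/L`, then
`E[f(x_{k+1})] − E[f(x_k)] ≤ −μ η_k E[f(x_k) − f(x⋆)] + L d σ⋆² η_k²/(2 b_k)`. -/
theorem sgd_one_step_decrease_pl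
    {Ω : Type*} {m0 : MeasurableSpace Ω} {μ : Measure Ω} [IsProbabilityMeasure μ]
    {d : ℕ} (f : EuclideanSpace ℝ (Fin d) → ℝ) (L : ℝ)
    (hf : ContDiff ℝ 1 f)
    (hL : ∀ x y : EuclideanSpace ℝ (Fin d), ‖gradient f x - gradient f y‖ ≤ L * ‖x - y‖)
    (xstar : EuclideanSpace ℝ (Fin d)) (hmin : ∀ x, f xstar ≤ f x)
    (μpl : ℝ) (hμpl : 0 < μpl)
    (hpl : ∀ z : EuclideanSpace ℝ (Fin d), 2 * μpl * (f z - f xstar) ≤ ‖gradient f z‖ ^ 2)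
    (ℱ : Filtration ℕ m0)
    (x G : ℕ → Ω → EuclideanSpace ℝ (Fin d))
    (x0 : EuclideanSpace ℝ (Fin d)) (hx0 : x 0 = fun _ => x0)
    (hx_meas : ∀ k, Measurable[ℱ k] (x k))
    (σsq : ℝ) (hσsq : 0 ≤ σsq)
    (b : ℕ → ℝ) (hb : ∀ k, 1 ≤ b k)
    (h : ℝ) (hh : 0 < h)
    (ψ : ℕ → ℝ) (hψpos : ∀ k, 0 < ψ k) (hψle : ∀ k, ψ k ≤ 1)
    (hψ0 : ψ 0 = 1) (hψmono : ∀ k, ψ (k + 1) ≤ ψ k)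
    (η : ℕ → ℝ) (hη : ∀ k, η k = h * ψ k)
    (hupdate : ∀ k ω, x (k + 1) ω = x k ω - η k • G k ω)
    (hG2 : ∀ k, MemLp (G k) 2 μ)
    (hGmean : ∀ k, μ[G k | ℱ k] =ᵐ[μ] fun ω => gradient f (x k ω))
    (hGvar : ∀ k, ∀ᵐ ω ∂μ,
      (μ[fun ω' => ‖G k ω' - gradient f (x k ω')‖ ^ 2 | ℱ k]) ω ≤ d * σsq / b k)
    (k : ℕ) :
    η k ≤ 1 / L →
      (∫ ω, f (x (k + 1) ω) ∂μ) - ∫ ω, f (x k ω) ∂μ ≤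
        -(μpl * η k) * ∫ ω, (f (x k ω) - f xstar) ∂μ + L * d * σsq * η k ^ 2 / (2 * b k) := by
  intro hstep
  have he : 0 < η k := by rw [hη]; exact mul_pos hh (hψpos k)
  have hLpos : 0 < L := by
    rcases lt_or_ge 0 L with hL0 | hL0
    · exact hL0
    · exfalso
      have : 1 / L ≤ 0 := div_nonpos_of_nonneg_of_nonpos zero_le_one hL0
      linarith
  have hbk : (0:ℝ) < b k := lt_of_lt_of_le one_pos (hb k)
  have hgc : Continuous (gradient f) := by
    have h1 : Continuous (fderiv ℝ f) := hf.continuous_fderiv one_ne_zero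
    exact (InnerProductSpace.toDual ℝ _).symm.continuous.comp h1
  -- x j is in L²
  have hxL2 : ∀ j, MemLp (x j) 2 μ := by
    intro j
    induction j with
    | zero => rw [hx0]; exact memLp_const x0
    | succ n ih =>
      have hxe : x (n + 1) = fun ω => x n ω - η n • G n ω := funext (hupdate n)
      rw [hxe]
      exact ih.sub ((hG2 n).const_smul (η n))
  have hcomp2 : ∀ (u : Ω → EuclideanSpace ℝ (Fin d)), MemLp u 2 μ →
      ∀ i : Fin d, MemLp (fun ω => u ω i) 2 μ := by
    intro u hu i
    have := (EuclideanSpace.proj (𝕜 := ℝ) i).comp_memLp' hu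
    exact this
  set g : Ω → EuclideanSpace ℝ (Fin d) := fun ω => gradient f (x k ω) with hgdef
  have hg_sm : StronglyMeasurable[ℱ k] g :=
    hgc.comp_stronglyMeasurable (hx_meas k).stronglyMeasurable
  have hg_meas : Measurable[m0] (x k) := (hx_meas k).mono (ℱ.le k) le_rfl
  -- g in L²
  have hg2 : MemLp g 2 μ := by
    have hbnd : MemLp (fun ω => ‖gradient f 0‖ + L * ‖x k ω‖) 2 μ :=
      by have h1 : MemLp (fun ω => L * ‖x k ω‖) 2 μ := (hxL2 k).norm.const_mul L
         have h0 : MemLp (fun _ : Ω => ‖gradient f 0‖) 2 μ := memLp_const _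
         exact h0.add h1
    refine hbnd.of_le ((hg_sm.mono (ℱ.le k)).aestronglyMeasurable) ?_
    filter_upwards with ω
    have h1 : ‖g ω - gradient f 0‖ ≤ L * ‖x k ω - 0‖ := hL (x k ω) 0
    have h2 : ‖g ω‖ - ‖gradient f 0‖ ≤ ‖g ω - gradient f 0‖ := norm_sub_norm_le _ _
    rw [sub_zero] at h1
    have h3 : ‖g ω‖ ≤ ‖gradient f 0‖ + L * ‖x k ω‖ := by linarith
    have h4 : (0:ℝ) ≤ ‖gradient f 0‖ + L * ‖x k ω‖ :=
      add_nonneg (norm_nonneg _) (mul_nonneg hLpos.le (norm_nonneg _))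
    calc ‖g ω‖ ≤ ‖gradient f 0‖ + L * ‖x k ω‖ := h3
      _ = ‖‖gradient f 0‖ + L * ‖x k ω‖‖ := (Real.norm_of_nonneg h4).symm
  -- quadratic growth of f, integrability of f ∘ x j
  have hfquad : ∀ z : EuclideanSpace ℝ (Fin d),
      |f z| ≤ |f 0| + ‖gradient f 0‖ * ‖z‖ + (3 * L / 2) * ‖z‖ ^ 2 := by
    intro z
    have hup := descent_lemma f L hf hL 0 z
    have hlo := descent_lemma f L hf hL z 0
    rw [sub_zero] at hup
    rw [zero_sub] at hlo
    have h1 : |⟪gradient f 0, z⟫| ≤ ‖gradient f 0‖ * ‖z‖ := abs_real_inner_le_norm _ _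
    have h2 : |⟪gradient f z, -z⟫| ≤ ‖gradient f z‖ * ‖z‖ := by
      simpa [norm_neg] using abs_real_inner_le_norm (gradient f z) (-z)
    have h3 : ‖gradient f z‖ ≤ ‖gradient f 0‖ + L * ‖z‖ := by
      have := hL z 0
      have h4 : ‖gradient f z‖ - ‖gradient f 0‖ ≤ ‖gradient f z - gradient f 0‖ :=
        norm_sub_norm_le _ _
      rw [sub_zero] at this
      linarith
    have h5 : ‖(-z : EuclideanSpace ℝ (Fin d))‖ ^ 2 = ‖z‖ ^ 2 := by rw [norm_neg]
    rw [h5] at hlo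
    have h6 := abs_le.1 h1
    have h7 := abs_le.1 h2
    have h8 : (0:ℝ) ≤ ‖z‖ := norm_nonneg _
    rw [abs_le]
    constructor
    · nlinarith [mul_le_mul_of_nonneg_right h3 h8, abs_nonneg (f 0), neg_abs_le (f 0)]
    · nlinarith [abs_nonneg (f 0), le_abs_self (f 0)]
  have hfint : ∀ j, Integrable (fun ω => f (x j ω)) μ := by
    intro j
    have hbnd : Integrable (fun ω => |f 0| + ‖gradient f 0‖ * ‖x j ω‖
        + (3 * L / 2) * ‖x j ω‖ ^ 2) μ :=
      ((integrable_const _).add (((hxL2 j).norm.integrable one_le_two).const_mul _)).add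
        ((hxL2 j).norm.integrable_sq.const_mul _)
    refine hbnd.mono' (hf.continuous.comp_aestronglyMeasurable
      (hxL2 j).aestronglyMeasurable) ?_
    filter_upwards with ω
    rw [Real.norm_eq_abs]
    exact hfquad (x j ω)
  -- basic integrabilities
  have hGint : Integrable (G k) μ := (hG2 k).integrable one_le_two
  have hgint : Integrable g μ := hg2.integrable one_le_two
  have hGsq_int : Integrable (fun ω => ‖G k ω‖ ^ 2) μ := (hG2 k).norm.integrable_sq
  have hgsq_int : Integrable (fun ω => ‖g ω‖ ^ 2) μ := hg2.norm.integrable_sq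
  have hinner_int : Integrable (fun ω => ⟪g ω, G k ω⟫) μ := memL2_inner_integrable hg2 (hG2 k)
  -- key identity : ∫ ⟪g, G⟫ = ∫ ‖g‖²
  have hIP : (∫ ω, ⟪g ω, G k ω⟫ ∂μ) = ∫ ω, ‖g ω‖ ^ 2 ∂μ := by
    have hcomp : ∀ i : Fin d, (∫ ω, g ω i * G k ω i ∂μ) = ∫ ω, g ω i * g ω i ∂μ := by
      intro i
      have hGi2 : MemLp (fun ω => G k ω i) 2 μ := hcomp2 _ (hG2 k) i
      have hgi2 : MemLp (fun ω => g ω i) 2 μ := hcomp2 _ hg2 i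
      have hGi_int : Integrable (fun ω => G k ω i) μ := hGi2.integrable one_le_two
      have hgi_int : Integrable (fun ω => g ω i) μ := hgi2.integrable one_le_two
      have hgi_sm : StronglyMeasurable[ℱ k] (fun ω => g ω i) :=
        (EuclideanSpace.proj (𝕜 := ℝ) i).continuous.comp_stronglyMeasurable hg_sm
      have hgi_cond : (fun ω => g ω i) =ᵐ[μ] μ[(fun ω => G k ω i) | ℱ k] := by
        refine ae_eq_condExp_of_forall_setIntegral_eq (ℱ.le k) hGi_int
          (fun s _ _ => hgi_int.integrableOn) ?_
          hgi_sm.aestronglyMeasurable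
        intro s hs hμs
        have e1 : (∫ ω in s, g ω i ∂μ) = (EuclideanSpace.proj (𝕜 := ℝ) i) (∫ ω in s, g ω ∂μ) := by
          simpa [PiLp.proj_apply] using
            (ContinuousLinearMap.integral_comp_comm (EuclideanSpace.proj (𝕜 := ℝ) i)
              hgint.integrableOn)
        have e2 : (∫ ω in s, G k ω i ∂μ) = (EuclideanSpace.proj (𝕜 := ℝ) i)
            (∫ ω in s, G k ω ∂μ) := by
          simpa [PiLp.proj_apply] using
            (ContinuousLinearMap.integral_comp_comm (EuclideanSpace.proj (𝕜 := ℝ) i)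
              hGint.integrableOn)
        have e3 : (∫ ω in s, g ω ∂μ) = ∫ ω in s, (μ[G k | ℱ k]) ω ∂μ :=
          integral_congr_ae (ae_restrict_of_ae (hGmean k).symm)
        have e4 : (∫ ω in s, (μ[G k | ℱ k]) ω ∂μ) = ∫ ω in s, G k ω ∂μ :=
          setIntegral_condExp (ℱ.le k) hGint hs
        rw [e1, e2, e3, e4]
      have hmul_int : Integrable ((fun ω => g ω i) * (fun ω => G k ω i)) μ := by
        have := memL2_mul_integrable hgi2 hGi2
        exact this
      have hpull := condExp_mul_of_stronglyMeasurable_left (m := ℱ k) hgi_sm hmul_int hGi_int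
      calc (∫ ω, g ω i * G k ω i ∂μ)
          = ∫ ω, ((fun ω => g ω i) * (fun ω => G k ω i)) ω ∂μ := by simp [Pi.mul_apply]
        _ = ∫ ω, (μ[(fun ω => g ω i) * (fun ω => G k ω i) | ℱ k]) ω ∂μ :=
            (integral_condExp (ℱ.le k)).symm
        _ = ∫ ω, ((fun ω => g ω i) * μ[(fun ω => G k ω i) | ℱ k]) ω ∂μ :=
            integral_congr_ae hpull
        _ = ∫ ω, g ω i * g ω i ∂μ := by
            refine integral_congr_ae ?_
            filter_upwards [hgi_cond] with ω hω
            simp [Pi.mul_apply, ← hω]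
    have hprod_int : ∀ i : Fin d, Integrable (fun ω => g ω i * G k ω i) μ := fun i =>
      memL2_mul_integrable (hcomp2 _ hg2 i) (hcomp2 _ (hG2 k) i)
    have hprod_int' : ∀ i : Fin d, Integrable (fun ω => g ω i * g ω i) μ := fun i =>
      memL2_mul_integrable (hcomp2 _ hg2 i) (hcomp2 _ hg2 i)
    calc (∫ ω, ⟪g ω, G k ω⟫ ∂μ)
        = ∫ ω, ∑ i : Fin d, g ω i * G k ω i ∂μ := by
          refine integral_congr_ae ?_
          filter_upwards with ω
          simp [PiLp.inner_apply, RCLike.inner_apply, conj_trivial]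
          exact Finset.sum_congr rfl (fun i _ => mul_comm _ _)
      _ = ∑ i : Fin d, ∫ ω, g ω i * G k ω i ∂μ :=
          integral_finset_sum _ (fun i _ => hprod_int i)
      _ = ∑ i : Fin d, ∫ ω, g ω i * g ω i ∂μ := by
          exact Finset.sum_congr rfl (fun i _ => hcomp i)
      _ = ∫ ω, ∑ i : Fin d, g ω i * g ω i ∂μ :=
          (integral_finset_sum _ (fun i _ => hprod_int' i)).symm
      _ = ∫ ω, ‖g ω‖ ^ 2 ∂μ := by
          refine integral_congr_ae ?_
          filter_upwards with ω
          rw [← real_inner_self_eq_norm_sq]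
          simp [PiLp.inner_apply, RCLike.inner_apply, conj_trivial]
          rw [EuclideanSpace.norm_sq_eq]; simp [sq]
  -- variance bound
  have hVint : Integrable (fun ω => ‖G k ω - gradient f (x k ω)‖ ^ 2) μ := by
    have := ((hG2 k).sub hg2).norm.integrable_sq
    simpa [Pi.sub_apply, hgdef] using this
  have hIV : (∫ ω, ‖G k ω - gradient f (x k ω)‖ ^ 2 ∂μ) ≤ d * σsq / b k := by
    rw [← integral_condExp (f := fun ω => ‖G k ω - gradient f (x k ω)‖ ^ 2) (ℱ.le k)]
    have hmono := integral_mono_ae integrable_condExp (integrable_const (d * σsq / b k)) (hGvar k)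
    simpa using hmono
  -- expansion of ∫ ‖G‖²
  have hIG : (∫ ω, ‖G k ω‖ ^ 2 ∂μ)
      = (∫ ω, ‖G k ω - gradient f (x k ω)‖ ^ 2 ∂μ)
        + 2 * (∫ ω, ⟪g ω, G k ω⟫ ∂μ) - ∫ ω, ‖g ω‖ ^ 2 ∂μ := by
    have hexp : ∀ ω, ‖G k ω‖ ^ 2
        = ‖G k ω - gradient f (x k ω)‖ ^ 2 + 2 * ⟪g ω, G k ω⟫ - ‖g ω‖ ^ 2 := by
      intro ω
      have hns := norm_sub_sq_real (G k ω) (g ω)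
      have hcomm : ⟪G k ω, g ω⟫ = ⟪g ω, G k ω⟫ := real_inner_comm _ _
      rw [hgdef]
      simp only at hns ⊢
      linarith [hns, hcomm.symm.le, hcomm.le]
    calc (∫ ω, ‖G k ω‖ ^ 2 ∂μ)
        = ∫ ω, (‖G k ω - gradient f (x k ω)‖ ^ 2 + 2 * ⟪g ω, G k ω⟫ - ‖g ω‖ ^ 2) ∂μ :=
          integral_congr_ae (by filter_upwards with ω; exact hexp ω)
      _ = (∫ ω, ‖G k ω - gradient f (x k ω)‖ ^ 2 ∂μ)
            + 2 * (∫ ω, ⟪g ω, G k ω⟫ ∂μ) - ∫ ω, ‖g ω‖ ^ 2 ∂μ := by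
          have hA : Integrable (fun ω => ‖G k ω - gradient f (x k ω)‖ ^ 2
              + 2 * ⟪g ω, G k ω⟫) μ := hVint.add (hinner_int.const_mul 2)
          rw [integral_sub hA hgsq_int, integral_add hVint (hinner_int.const_mul 2),
            integral_const_mul _ _]
  -- pointwise descent
  have hptw : ∀ ω, f (x (k + 1) ω) ≤ f (x k ω) - η k * ⟪g ω, G k ω⟫
      + L / 2 * (η k ^ 2 * ‖G k ω‖ ^ 2) := by
    intro ω
    have hd := descent_lemma f L hf hL (x k ω) (x (k + 1) ω)
    have h1 : x (k + 1) ω - x k ω = -(η k • G k ω) := by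
      rw [hupdate k ω]; exact sub_sub_cancel_left _ _
    rw [h1, inner_neg_right, real_inner_smul_right, norm_neg, norm_smul] at hd
    have h2 : (‖η k‖ * ‖G k ω‖) ^ 2 = η k ^ 2 * ‖G k ω‖ ^ 2 := by
      rw [mul_pow, Real.norm_eq_abs, sq_abs]
    rw [h2] at hd
    rw [hgdef]
    simp only
    linarith [hd]
  -- integrated descent
  have hint1 : (∫ ω, f (x (k + 1) ω) ∂μ)
      ≤ (∫ ω, f (x k ω) ∂μ) - η k * (∫ ω, ⟪g ω, G k ω⟫ ∂μ)
        + L / 2 * (η k ^ 2 * ∫ ω, ‖G k ω‖ ^ 2 ∂μ) := by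
    have hrhs_int : Integrable (fun ω => f (x k ω) - η k * ⟪g ω, G k ω⟫
        + L / 2 * (η k ^ 2 * ‖G k ω‖ ^ 2)) μ :=
      ((hfint k).sub (hinner_int.const_mul _)).add
        ((hGsq_int.const_mul (η k ^ 2)).const_mul (L / 2))
    have := integral_mono (hfint (k + 1)) hrhs_int hptw
    calc (∫ ω, f (x (k + 1) ω) ∂μ)
        ≤ ∫ ω, (f (x k ω) - η k * ⟪g ω, G k ω⟫ + L / 2 * (η k ^ 2 * ‖G k ω‖ ^ 2)) ∂μ := this
      _ = (∫ ω, f (x k ω) ∂μ) - η k * (∫ ω, ⟪g ω, G k ω⟫ ∂μ)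
            + L / 2 * (η k ^ 2 * ∫ ω, ‖G k ω‖ ^ 2 ∂μ) := by
          have hA : Integrable (fun ω => f (x k ω) - η k * ⟪g ω, G k ω⟫) μ :=
            (hfint k).sub (hinner_int.const_mul _)
          have hB : Integrable (fun ω => L / 2 * (η k ^ 2 * ‖G k ω‖ ^ 2)) μ :=
            (hGsq_int.const_mul (η k ^ 2)).const_mul (L / 2)
          rw [integral_add hA hB, integral_sub (hfint k) (hinner_int.const_mul _),
            integral_const_mul _ _, integral_const_mul _ _, integral_const_mul _ _]
  -- PL inequality integrated
  have hplI : 2 * μpl * (∫ ω, (f (x k ω) - f xstar) ∂μ) ≤ ∫ ω, ‖g ω‖ ^ 2 ∂μ := by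
    rw [← integral_const_mul _ _]
    refine integral_mono (((hfint k).sub (integrable_const _)).const_mul _) hgsq_int ?_
    intro ω
    exact hpl (x k ω)
  have hS : (0:ℝ) ≤ ∫ ω, (f (x k ω) - f xstar) ∂μ :=
    integral_nonneg (fun ω => sub_nonneg.2 (hmin (x k ω)))
  have hIg : (0:ℝ) ≤ ∫ ω, ‖g ω‖ ^ 2 ∂μ := integral_nonneg (fun ω => sq_nonneg _)
  -- final arithmetic
  set Ig := ∫ ω, ‖g ω‖ ^ 2 ∂μ
  set IV := ∫ ω, ‖G k ω - gradient f (x k ω)‖ ^ 2 ∂μ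
  set S := ∫ ω, (f (x k ω) - f xstar) ∂μ
  have hLe : L * η k ≤ 1 := by
    have h1 := mul_le_mul_of_nonneg_left hstep hLpos.le
    rw [mul_one_div, div_self hLpos.ne'] at h1
    exact h1
  have hIGval : (∫ ω, ‖G k ω‖ ^ 2 ∂μ) = IV + Ig := by
    rw [hIG, hIP]; ring
  rw [hIP] at hint1
  rw [hIGval] at hint1
  have hVnonneg : (0:ℝ) ≤ IV := integral_nonneg (fun ω => sq_nonneg _)
  -- combine
  have key : (∫ ω, f (x (k + 1) ω) ∂μ) - (∫ ω, f (x k ω) ∂μ)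
      ≤ -(η k) * Ig + L / 2 * (η k ^ 2 * (IV + Ig)) := by linarith
  have hterm : L / 2 * (η k ^ 2 * IV) ≤ L * d * σsq * η k ^ 2 / (2 * b k) := by
    have h1 : L / 2 * η k ^ 2 * IV ≤ L / 2 * η k ^ 2 * (d * σsq / b k) := by
      refine mul_le_mul_of_nonneg_left hIV ?_
      positivity
    calc L / 2 * (η k ^ 2 * IV) = L / 2 * η k ^ 2 * IV := by ring
      _ ≤ L / 2 * η k ^ 2 * (d * σsq / b k) := h1
      _ = L * d * σsq * η k ^ 2 / (2 * b k) := by field_simp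
  have hcoeff : -(η k) * Ig + L / 2 * (η k ^ 2 * Ig) ≤ -(μpl * η k) * S := by
    have h1 : L / 2 * (η k ^ 2 * Ig) ≤ η k / 2 * Ig := by
      have : L * η k ^ 2 ≤ η k := by nlinarith
      nlinarith
    have h2 : -(η k) * Ig + η k / 2 * Ig = -(η k / 2) * Ig := by ring
    have h3 : -(η k / 2) * Ig ≤ -(η k / 2) * (2 * μpl * S) := by
      have := hplI
      nlinarith
    calc -(η k) * Ig + L / 2 * (η k ^ 2 * Ig) ≤ -(η k) * Ig + η k / 2 * Ig := by linarith
      _ = -(η k / 2) * Ig := h2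
      _ ≤ -(η k / 2) * (2 * μpl * S) := h3
      _ = -(μpl * η k) * S := by ring
  linarith
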